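/- Let f be the Fibonacci sequence with f_0 = f_1 = 1. For each n ∈ ℕ and real sequence x (x_{−1}=0), a_n x_n = ∑_{k=0}^{n} (f_{n+1}²/(f_k f_{k+1})) a_n y_k, where y_k = (f_k/f_{k+1})x_k − (f_{k+1}/f_k)x_{k−1}. -/

import Mathlib

open Filter Topology

def fibo : ℕ → ℕ
  | 0 => 1
  | 1 => 1
  | n + 2 => fibo (n + 1) + fibo n

noncomputable def Fhat (x : ℕ → ℝ) : ℕ → ℝ
  | 0 => (fibo 0 : ℝ) / fibo 1 * x 0
  | k + 1 => (fibo (k + 1) : ℝ) / fibo (k + 2) * x (k + 1)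
      - (fibo (k + 2) : ℝ) / fibo (k + 1) * x k

noncomputable def xseq (y : ℕ → ℝ) (k : ℕ) : ℝ :=
  ∑ j ∈ Finset.range (k + 1), ((fibo (k + 1) : ℝ) ^ 2 / ((fibo j : ℝ) * fibo (j + 1))) * y j

lemma fibo_pos (n : ℕ) : 0 < fibo n := by
  induction n using Nat.strong_induction_on with
  | _ n ih =>
    match n with
    | 0 => simp [fibo]
    | 1 => simp [fibo]
    | n + 2 =>
      have h1 := ih (n + 1) (by omega)
      simp [fibo]; omega

lemma fibo_ne (n : ℕ) : (fibo n : ℝ) ≠ 0 := by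
  exact_mod_cast (fibo_pos n).ne'

lemma telescope (x : ℕ → ℝ) (n : ℕ) :
    ∑ k ∈ Finset.range (n + 1), 1 / ((fibo k : ℝ) * fibo (k + 1)) * Fhat x k
      = x n / (fibo (n + 1) : ℝ) ^ 2 := by
  induction n with
  | zero => simp [Fhat, fibo]
  | succ n ih =>
    rw [Finset.sum_range_succ, ih]
    show x n / (fibo (n + 1) : ℝ) ^ 2
        + 1 / ((fibo (n + 1) : ℝ) * fibo (n + 2))
          * ((fibo (n + 1) : ℝ) / fibo (n + 2) * x (n + 1)
            - (fibo (n + 2) : ℝ) / fibo (n + 1) * x n) = _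
    have h1 := fibo_ne (n + 1)
    have h2 := fibo_ne (n + 2)
    field_simp
    ring

theorem term_via_transform (a x : ℕ → ℝ) (n : ℕ) :
    a n * x n
      = ∑ k ∈ Finset.range (n + 1),
          (fibo (n + 1) : ℝ) ^ 2 / ((fibo k : ℝ) * fibo (k + 1)) * a n * Fhat x k := by
  have h := telescope x n
  calc a n * x n
      = (fibo (n + 1) : ℝ) ^ 2 * a n
          * ∑ k ∈ Finset.range (n + 1), 1 / ((fibo k : ℝ) * fibo (k + 1)) * Fhat x k := by
        rw [h]
        have h1 := fibo_ne (n + 1)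
        field_simp
    _ = _ := by
        rw [Finset.mul_sum]
        apply Finset.sum_congr rfl
        intro k _
        field_simp
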